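/- Define P_max := (1/4)[V_L^*] I_L^*. Then P_max ≥ 0 entrywise and P_max ≠ 0; P_max is feasible with (1/2)V_L^* as an operating point, and 1ᵀ P_max = (1/4) V_L^*ᵀ Y_LL V_L^*. For every feasible P one has 1ᵀ P ≤ 1ᵀ P_max, with equality if and only if P = P_max; and the only operating point for P_max is (1/2)V_L^*. -/

import Mathlib

open Matrix Set

noncomputable section

/-- `A` is irreducible: for every nonempty proper subset `α` of the index set,
the submatrix `A[α, αᶜ]` is not the zero matrix. -/
def IsIrred {k : ℕ} (A : Matrix (Fin k) (Fin k) ℝ) : Prop :=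
  ∀ α : Finset (Fin k), α.Nonempty → α ≠ Finset.univ → ∃ i ∈ α, ∃ j ∈ αᶜ, A i j ≠ 0

/-- `A` is a Z-matrix: off-diagonal entries are nonpositive. -/
def IsZmat {k : ℕ} (A : Matrix (Fin k) (Fin k) ℝ) : Prop :=
  ∀ i j, i ≠ j → A i j ≤ 0

/-- `A` is an M-matrix: a Z-matrix all of whose eigenvalues have nonnegative real part. -/
def IsMmat {k : ℕ} (A : Matrix (Fin k) (Fin k) ℝ) : Prop :=
  IsZmat A ∧ ∀ μ ∈ spectrum ℂ (A.map (Complex.ofReal)), 0 ≤ μ.re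

/-- `A` is a nonsingular M-matrix: a Z-matrix all of whose eigenvalues have positive real part. -/
def IsNonsingMmat {k : ℕ} (A : Matrix (Fin k) (Fin k) ℝ) : Prop :=
  IsZmat A ∧ ∀ μ ∈ spectrum ℂ (A.map (Complex.ofReal)), 0 < μ.re

/-- `P_c(x) = [x] Y (V* − x)`. -/
def Pc {k : ℕ} (Y : Matrix (Fin k) (Fin k) ℝ) (Vs : Fin k → ℝ) (x : Fin k → ℝ) : Fin k → ℝ :=
  Matrix.diagonal x *ᵥ (Y *ᵥ (Vs - x))

/-- Jacobian of `P_c` at `x`: `J(x) = [Y(V* − x)] − [x] Y`. -/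
def Jmat {k : ℕ} (Y : Matrix (Fin k) (Fin k) ℝ) (Vs : Fin k → ℝ) (x : Fin k → ℝ) :
    Matrix (Fin k) (Fin k) ℝ :=
  Matrix.diagonal (Y *ᵥ (Vs - x)) - Matrix.diagonal x * Y

/-- long-term voltage stable operating points. -/
def Dset {k : ℕ} (Y : Matrix (Fin k) (Fin k) ℝ) (Vs : Fin k → ℝ) : Set (Fin k → ℝ) :=
  {x | (∀ i, 0 < x i) ∧ IsUnit (Jmat Y Vs x).det ∧ ∀ i j, (Jmat Y Vs x)⁻¹ i j < 0}

/-- feasible power demands. -/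
def Fset {k : ℕ} (Y : Matrix (Fin k) (Fin k) ℝ) (Vs : Fin k → ℝ) : Set (Fin k → ℝ) :=
  {P | ∃ x, (∀ i, 0 < x i) ∧ Pc Y Vs x = P}

/-- `h(λ) = (1/2)([λ] Y + Y [λ])`. -/
def hmat {k : ℕ} (Y : Matrix (Fin k) (Fin k) ℝ) (l : Fin k → ℝ) : Matrix (Fin k) (Fin k) ℝ :=
  (1/2 : ℝ) • (Matrix.diagonal l * Y + Y * Matrix.diagonal l)

/-- `Λ₁ = {λ ∈ Λ : λ > 0, 1ᵀλ = 1}`. -/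
def Lam1 {k : ℕ} (Y : Matrix (Fin k) (Fin k) ℝ) : Set (Fin k → ℝ) :=
  {l | (hmat Y l).PosDef ∧ (∀ i, 0 < l i) ∧ ∑ i, l i = 1}

/-- `φ(λ) = (1/2) h(λ)⁻¹ [λ] I*` where `I* = Y V*`. -/
def phiv {k : ℕ} (Y : Matrix (Fin k) (Fin k) ℝ) (Vs : Fin k → ℝ) (l : Fin k → ℝ) : Fin k → ℝ :=
  (1/2 : ℝ) • ((hmat Y l)⁻¹ *ᵥ (Matrix.diagonal l *ᵥ (Y *ᵥ Vs)))

/-- `‖x‖_{h(λ)}²  = xᵀ h(λ) x`. -/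
def qnorm {k : ℕ} (Y : Matrix (Fin k) (Fin k) ℝ) (l x : Fin k → ℝ) : ℝ :=
  x ⬝ᵥ (hmat Y l *ᵥ x)

/-- The half-space `H_λ`. -/
def Hset {k : ℕ} (Y : Matrix (Fin k) (Fin k) ℝ) (Vs : Fin k → ℝ) (l : Fin k → ℝ) :
    Set (Fin k → ℝ) :=
  {y | l ⬝ᵥ y ≤ qnorm Y l (phiv Y Vs l)}


lemma dv_symm' {n : ℕ} {Y : Matrix (Fin n) (Fin n) ℝ} (h : Y.IsHermitian) (x y : Fin n → ℝ) :
    x ⬝ᵥ (Y *ᵥ y) = y ⬝ᵥ (Y *ᵥ x) := by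
  rw [dotProduct_mulVec, ← mulVec_transpose, show Yᵀ = Y from h.eq]
  exact dotProduct_comm _ _

lemma key_identity {n : ℕ} {Y : Matrix (Fin n) (Fin n) ℝ} (h : Y.IsHermitian)
    (Vs x : Fin n → ℝ) :
    x ⬝ᵥ (Y *ᵥ (Vs - x)) =
      (1/4:ℝ) * (Vs ⬝ᵥ (Y *ᵥ Vs)) -
        ((x - (1/2:ℝ)•Vs) ⬝ᵥ (Y *ᵥ (x - (1/2:ℝ)•Vs))) := by
  have hsym := dv_symm' h Vs x
  simp only [mulVec_sub, dotProduct_sub, sub_dotProduct, mulVec_smul, dotProduct_smul,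
    smul_dotProduct, smul_eq_mul]
  rw [hsym]; ring

lemma sumPc {n : ℕ} (Y : Matrix (Fin n) (Fin n) ℝ) (Vs x : Fin n → ℝ) :
    ∑ i, Pc Y Vs x i = x ⬝ᵥ (Y *ᵥ (Vs - x)) := by
  simp [Pc, dotProduct, mulVec_diagonal]

lemma pd_pos {n : ℕ} {Y : Matrix (Fin n) (Fin n) ℝ} (hPD : Y.PosDef) (x : Fin n → ℝ)
    (hx : x ≠ 0) : 0 < x ⬝ᵥ (Y *ᵥ x) := by
  have := hPD.dotProduct_mulVec_pos hx
  simpa using this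

theorem stmt_3 (n : ℕ) (hn : 1 ≤ n)
    (Y : Matrix (Fin n) (Fin n) ℝ)
    (hPD : Y.PosDef)
    (hZ : IsZmat Y)
    (hirr : IsIrred Y)
    (Vs : Fin n → ℝ) (hVs : ∀ i, 0 < Vs i)
    (hInn : ∀ i, 0 ≤ (Y *ᵥ Vs) i) (hIne : Y *ᵥ Vs ≠ 0)
    (Pmax : Fin n → ℝ) (hPmax : Pmax = (1/4 : ℝ) • (Matrix.diagonal Vs *ᵥ (Y *ᵥ Vs))) :
    (∀ i, 0 ≤ Pmax i) ∧ Pmax ≠ 0 ∧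
    Pc Y Vs ((1/2 : ℝ) • Vs) = Pmax ∧ Pmax ∈ Fset Y Vs ∧
    (∑ i, Pmax i) = (1/4 : ℝ) * (Vs ⬝ᵥ (Y *ᵥ Vs)) ∧
    (∀ P ∈ Fset Y Vs, ∑ i, P i ≤ ∑ i, Pmax i) ∧
    (∀ P ∈ Fset Y Vs, ((∑ i, P i) = (∑ i, Pmax i) ↔ P = Pmax)) ∧
    (∀ x, (∀ i, 0 < x i) → Pc Y Vs x = Pmax → x = (1/2 : ℝ) • Vs) := by
  have hPmaxi : ∀ i, Pmax i = (1/4:ℝ) * (Vs i * (Y *ᵥ Vs) i) := by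
    intro i; rw [hPmax]; simp only [Pi.smul_apply, mulVec_diagonal, smul_eq_mul]
  have h1 : ∀ i, 0 ≤ Pmax i := by
    intro i; rw [hPmaxi i]
    have := mul_nonneg (le_of_lt (hVs i)) (hInn i)
    linarith
  have hPcHalf : Pc Y Vs ((1/2 : ℝ) • Vs) = Pmax := by
    funext i
    rw [hPmaxi i]
    have : Vs - (1/2:ℝ) • Vs = (1/2:ℝ) • Vs := by
      funext j; simp; ring
    simp only [Pc, this, mulVec_diagonal, mulVec_smul, Pi.smul_apply, smul_eq_mul]
    ring
  have h2 : Pmax ≠ 0 := by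
    intro h0
    apply hIne
    funext i
    have hi := congrFun h0 i
    rw [hPmaxi i] at hi
    simp only [Pi.zero_apply] at hi
    have := hVs i
    have : Vs i * (Y *ᵥ Vs) i = 0 := by linarith [hi]
    rcases mul_eq_zero.mp this with h | h
    · exact absurd h (ne_of_gt (hVs i))
    · simpa using h
  have hsum : (∑ i, Pmax i) = (1/4 : ℝ) * (Vs ⬝ᵥ (Y *ᵥ Vs)) := by
    simp only [hPmaxi, dotProduct]
    rw [Finset.mul_sum]
  have hle : ∀ x : Fin n → ℝ, ∑ i, Pc Y Vs x i ≤ ∑ i, Pmax i := by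
    intro x
    rw [sumPc, key_identity hPD.1 Vs x, hsum]
    have : 0 ≤ (x - (1/2:ℝ)•Vs) ⬝ᵥ (Y *ᵥ (x - (1/2:ℝ)•Vs)) := by
      by_cases hd : x - (1/2:ℝ)•Vs = 0
      · rw [hd]; simp
      · exact le_of_lt (pd_pos hPD _ hd)
    linarith
  have huniq : ∀ x : Fin n → ℝ, (∑ i, Pc Y Vs x i) = ∑ i, Pmax i → x = (1/2:ℝ) • Vs := by
    intro x hx
    rw [sumPc, key_identity hPD.1 Vs x, hsum] at hx
    have hd0 : (x - (1/2:ℝ)•Vs) ⬝ᵥ (Y *ᵥ (x - (1/2:ℝ)•Vs)) = 0 := by linarith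
    by_contra hne
    have hd : x - (1/2:ℝ)•Vs ≠ 0 := fun h => hne (by
      funext i; have := congrFun h i; simpa [sub_eq_zero] using this)
    exact absurd hd0 (ne_of_gt (pd_pos hPD _ hd))
  refine ⟨h1, h2, hPcHalf, ⟨(1/2:ℝ) • Vs, fun i => by simpa using half_pos (hVs i), hPcHalf⟩,
    hsum, ?_, ?_, ?_⟩
  · rintro P ⟨x, hx, rfl⟩
    exact hle x
  · rintro P ⟨x, hx, rfl⟩
    constructor
    · intro h
      rw [huniq x h, hPcHalf]
    · intro h
      rw [h]
  · intro x hx hP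
    apply huniq
    rw [hP]
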